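/- Suppose v: ℝ → ℝ satisfies v'(x) = −[φ₀'(x)]^{−2} ∫_{−∞}^x [φ₀'(s)]² ds with φ₀ the Maxwell front. Then v'(x) ~ −(1/(2√2)) e^{2√2x/3} as x → +∞, and consequently w₁ = v·φ₀' satisfies w₁(x) ~ −(1/(6√2)) e^{√2x/3} as x → +∞. -/

import Mathlib

open Filter MeasureTheory

namespace VFF

open Real Set

noncomputable def aA : ℝ := Real.sqrt 2 / 3

lemma aA_pos : 0 < aA := by
  have : (0:ℝ) < Real.sqrt 2 := Real.sqrt_pos.mpr (by norm_num)
  unfold aA; linarith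

lemma aA_ne : aA ≠ 0 := ne_of_gt aA_pos

/-- The explicit derivative of the Maxwell front. -/
noncomputable def Pf (x : ℝ) : ℝ :=
  2/3 * (aA * Real.exp (-(aA*x))) / (1 + Real.exp (-(aA*x)))^2

/-- Antiderivative of `Pf ^ 2`. -/
noncomputable def Gf (x : ℝ) : ℝ :=
  4*aA/9 * ((2*(1 + Real.exp (-(aA*x)))^2)⁻¹ - (3*(1 + Real.exp (-(aA*x)))^3)⁻¹)

/-- The explicit value of `deriv v`. -/
noncomputable def hf (x : ℝ) : ℝ :=
  -(1/aA) * (1/6 * Real.exp (2*aA*x) + 2/3 * Real.exp (aA*x) + 1/2)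

/-- Antiderivative of `hf`. -/
noncomputable def Vf (x : ℝ) : ℝ :=
  -(1/aA) * (1/(12*aA) * Real.exp (2*aA*x) + 2/(3*aA) * Real.exp (aA*x) + x/2)

lemma one_add_exp_pos (x : ℝ) : 0 < 1 + Real.exp (-(aA*x)) := by positivity

lemma one_add_exp_ne (x : ℝ) : 1 + Real.exp (-(aA*x)) ≠ 0 := ne_of_gt (one_add_exp_pos x)

lemma hasDerivAt_E (x : ℝ) :
    HasDerivAt (fun x => Real.exp (-(aA*x))) (-(aA * Real.exp (-(aA*x)))) x := by
  have h := (((hasDerivAt_id x).const_mul aA).neg).exp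
  simpa [mul_comm] using h

lemma hasDerivAt_den (x : ℝ) :
    HasDerivAt (fun x => 1 + Real.exp (-(aA*x))) (-(aA * Real.exp (-(aA*x)))) x :=
  (hasDerivAt_E x).const_add 1

lemma Pf_pos (x : ℝ) : 0 < Pf x := by
  have := aA_pos
  unfold Pf; positivity

lemma Pf_continuous : Continuous Pf := by
  unfold Pf
  refine Continuous.div (by continuity) (by continuity) fun x => ?_
  exact pow_ne_zero 2 (one_add_exp_ne x)

lemma hasDerivAt_phi (φ₀ : ℝ → ℝ)
    (hφ₀ : ∀ x, φ₀ x = (2/3) / (1 + Real.exp (-(Real.sqrt 2) * x / 3))) (x : ℝ) :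
    HasDerivAt φ₀ (Pf x) x := by
  have harg : ∀ y : ℝ, -(Real.sqrt 2) * y / 3 = -(aA * y) := by
    intro y; unfold aA; ring
  have hφ : φ₀ = fun y => (2/3) / (1 + Real.exp (-(aA*y))) := by
    funext y; rw [hφ₀ y, harg y]
  rw [hφ]
  have h := (hasDerivAt_const x (2/3 : ℝ)).div (hasDerivAt_den x) (one_add_exp_ne x)
  refine h.congr_deriv ?_
  unfold Pf
  field_simp
  ring

lemma hasDerivAt_G (x : ℝ) : HasDerivAt Gf ((Pf x)^2) x := by
  set E := Real.exp (-(aA*x)) with hE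
  have h2ne : 2*(1 + E)^2 ≠ 0 := by positivity
  have h3ne : 3*(1 + E)^3 ≠ 0 := by positivity
  have hu2 : HasDerivAt (fun x => 2*(1 + Real.exp (-(aA*x)))^2)
      (2*((2:ℕ) * (1+E)^1 * (-(aA*E)))) x := ((hasDerivAt_den x).pow 2).const_mul 2
  have hu3 : HasDerivAt (fun x => 3*(1 + Real.exp (-(aA*x)))^3)
      (3*((3:ℕ) * (1+E)^2 * (-(aA*E)))) x := ((hasDerivAt_den x).pow 3).const_mul 3
  have h := ((hu2.inv h2ne).sub (hu3.inv h3ne)).const_mul (4*aA/9)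
  refine h.congr_deriv ?_
  unfold Pf
  have h1 : (1 : ℝ) + E ≠ 0 := one_add_exp_ne x
  field_simp
  ring

lemma Gf_nonneg (x : ℝ) : 0 ≤ Gf x := by
  set E := Real.exp (-(aA*x)) with hE
  have hE0 : 0 < E := Real.exp_pos _
  have h1 : (0:ℝ) < 1 + E := by linarith
  have key : (3*(1+E)^3)⁻¹ ≤ (2*(1+E)^2)⁻¹ := by
    apply inv_anti₀ (by positivity)
    have : (1:ℝ) ≤ 1 + E := by linarith
    nlinarith [pow_pos h1 2, pow_pos h1 3]
  have := aA_pos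
  unfold Gf
  have : (0:ℝ) ≤ (2*(1+E)^2)⁻¹ - (3*(1+E)^3)⁻¹ := by linarith
  positivity

lemma Gf_tendsto_atBot : Tendsto Gf atBot (nhds 0) := by
  have h1 : Tendsto (fun x : ℝ => -(aA*x)) atBot atTop := by
    have ha : Tendsto (fun x : ℝ => aA * x) atBot atBot :=
      Tendsto.const_mul_atBot aA_pos tendsto_id
    exact tendsto_neg_atBot_atTop.comp ha
  have hE : Tendsto (fun x : ℝ => Real.exp (-(aA*x))) atBot atTop :=
    Real.tendsto_exp_atTop.comp h1
  have hden : Tendsto (fun x : ℝ => 1 + Real.exp (-(aA*x))) atBot atTop :=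
    tendsto_atTop_add_const_left _ 1 hE
  have hpow2 : Tendsto (fun x : ℝ => (1 + Real.exp (-(aA*x)))^2) atBot atTop :=
    (tendsto_pow_atTop (by norm_num : (2:ℕ) ≠ 0)).comp hden
  have hpow3 : Tendsto (fun x : ℝ => (1 + Real.exp (-(aA*x)))^3) atBot atTop :=
    (tendsto_pow_atTop (by norm_num : (3:ℕ) ≠ 0)).comp hden
  have h2 : Tendsto (fun x : ℝ => (2*(1 + Real.exp (-(aA*x)))^2)⁻¹) atBot (nhds 0) :=
    (Tendsto.const_mul_atTop (by norm_num : (0:ℝ) < 2) hpow2).inv_tendsto_atTop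
  have h3 : Tendsto (fun x : ℝ => (3*(1 + Real.exp (-(aA*x)))^3)⁻¹) atBot (nhds 0) :=
    (Tendsto.const_mul_atTop (by norm_num : (0:ℝ) < 3) hpow3).inv_tendsto_atTop
  have h := ((h2.sub h3).const_mul (4*aA/9))
  rw [show (0:ℝ) = 4*aA/9 * (0 - 0) by ring]
  exact h

lemma int_Pf (x : ℝ) : IntegrableOn (fun s => (Pf s)^2) (Set.Iic x) := by
  refine integrableOn_Iic_of_intervalIntegral_norm_bounded (Gf x) x
    (fun y => ?_) (tendsto_id (x := atBot)) ?_
  · exact (Pf_continuous.pow 2).integrableOn_Ioc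
  · filter_upwards [eventually_le_atBot x] with y hy
    have hnorm : ∀ s, ‖(Pf s)^2‖ = (Pf s)^2 := fun s => by
      rw [Real.norm_eq_abs, abs_of_nonneg (sq_nonneg _)]
    calc (∫ s in y..x, ‖(Pf s)^2‖) = ∫ s in y..x, (Pf s)^2 := by
          simp_rw [hnorm]
      _ = Gf x - Gf y := intervalIntegral.integral_eq_sub_of_hasDerivAt
            (fun s _ => hasDerivAt_G s) ((Pf_continuous.pow 2).intervalIntegrable y x)
      _ ≤ Gf x := by linarith [Gf_nonneg y]

lemma integral_Pf (x : ℝ) : (∫ s in Set.Iic x, (Pf s)^2) = Gf x := by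
  rw [MeasureTheory.integral_Iic_of_hasDerivAt_of_tendsto'
    (fun s _ => hasDerivAt_G s) (int_Pf x) Gf_tendsto_atBot, sub_zero]

lemma key_eq (x : ℝ) : -((Pf x)^2)⁻¹ * Gf x = hf x := by
  set t := Real.exp (aA*x) with ht
  have htpos : 0 < t := Real.exp_pos _
  have hE : Real.exp (-(aA*x)) = t⁻¹ := by rw [Real.exp_neg]
  have h2 : Real.exp (2*aA*x) = t*t := by
    rw [ht, ← Real.exp_add]; ring_nf
  have h1 : (1:ℝ) + t⁻¹ ≠ 0 := by positivity
  unfold Pf Gf hf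
  rw [hE, h2]
  have := aA_ne
  field_simp
  ring

lemma hf_neg (x : ℝ) : hf x < 0 := by
  have h1 := Real.exp_pos (2*aA*x)
  have h2 := Real.exp_pos (aA*x)
  have := aA_pos
  unfold hf
  have hb : 0 < 1/6 * Real.exp (2*aA*x) + 2/3 * Real.exp (aA*x) + 1/2 := by positivity
  have ha : 0 < 1/aA := by positivity
  nlinarith

lemma hasDerivAt_V (x : ℝ) : HasDerivAt Vf (hf x) x := by
  have he1 : HasDerivAt (fun x => Real.exp (aA*x)) (aA * Real.exp (aA*x)) x := by
    have := ((hasDerivAt_id x).const_mul aA).exp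
    simpa [mul_comm] using this
  have he2 : HasDerivAt (fun x => Real.exp (2*aA*x)) (2*aA * Real.exp (2*aA*x)) x := by
    have := ((hasDerivAt_id x).const_mul (2*aA)).exp
    simpa [mul_comm] using this
  have hx : HasDerivAt (fun x : ℝ => x/2) (1/2) x := by
    simpa using (hasDerivAt_id x).div_const 2
  have h := (((he2.const_mul (1/(12*aA))).add (he1.const_mul (2/(3*aA)))).add hx).const_mul
    (-(1/aA))
  refine h.congr_deriv ?_
  unfold hf
  have := aA_ne
  field_simp
  ring

lemma exp_neg_tendsto (c : ℝ) (hc : 0 < c) :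
    Tendsto (fun x : ℝ => Real.exp (-(c*x))) atTop (nhds 0) := by
  apply Real.tendsto_exp_atBot.comp
  have h1 : Tendsto (fun x : ℝ => c * x) atTop atTop :=
    Tendsto.const_mul_atTop hc tendsto_id
  exact tendsto_neg_atTop_atBot.comp h1

lemma x_exp_tendsto : Tendsto (fun x : ℝ => x * Real.exp (-(2*aA*x))) atTop (nhds 0) := by
  have h2a : 0 < 2*aA := by linarith [aA_pos]
  have base : Tendsto (fun y : ℝ => y * Real.exp (-y)) atTop (nhds 0) := by
    simpa using tendsto_pow_mul_exp_neg_atTop_nhds_zero 1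
  have hmul : Tendsto (fun x : ℝ => 2*aA*x) atTop atTop :=
    Tendsto.const_mul_atTop h2a tendsto_id
  have comp : Tendsto (fun x : ℝ => (2*aA*x) * Real.exp (-(2*aA*x))) atTop (nhds 0) :=
    base.comp hmul
  have := comp.const_mul (1/(2*aA))
  simp only [mul_zero] at this
  apply this.congr
  intro x
  have := aA_ne
  field_simp

end VFF

open VFF Real

/-- if `v'(x) = −[φ₀'(x)]⁻² ∫_{−∞}^x [φ₀'(s)]² ds` with `φ₀` the Maxwell
front, then `v'(x) ~ −(1/(2√2)) e^{2√2x/3}` as `x → +∞`, and consequently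
`w₁ = v·φ₀'` satisfies `w₁(x) ~ −(1/(6√2)) e^{√2x/3}` as `x → +∞`. -/
theorem v_far_field (φ₀ v : ℝ → ℝ)
    (hφ₀ : ∀ x, φ₀ x = (2/3) / (1 + Real.exp (-(Real.sqrt 2) * x / 3)))
    (hv : ∀ x, deriv v x
      = -((deriv φ₀ x) ^ 2)⁻¹ * ∫ s in Set.Iic x, (deriv φ₀ s) ^ 2) :
    Tendsto (fun x => deriv v x / Real.exp (2 * Real.sqrt 2 * x / 3)) atTop
      (nhds (-(1 / (2 * Real.sqrt 2)))) ∧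
    Tendsto (fun x => v x * deriv φ₀ x / Real.exp (Real.sqrt 2 * x / 3)) atTop
      (nhds (-(1 / (6 * Real.sqrt 2)))) := by
  have hs2 : 0 < Real.sqrt 2 := Real.sqrt_pos.mpr (by norm_num)
  have hP : ∀ x, deriv φ₀ x = Pf x := fun x => (hasDerivAt_phi φ₀ hφ₀ x).deriv
  have hdv : ∀ x, deriv v x = hf x := by
    intro x
    rw [hv x]
    have hint : (fun s => (deriv φ₀ s)^2) = fun s => (Pf s)^2 := by
      funext s; rw [hP s]
    rw [hint, integral_Pf, hP x, key_eq]
  have hEx : Tendsto (fun x : ℝ => Real.exp (-(aA*x))) atTop (nhds 0) :=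
    exp_neg_tendsto aA aA_pos
  have hEx2 : Tendsto (fun x : ℝ => Real.exp (-(2*aA*x))) atTop (nhds 0) :=
    exp_neg_tendsto (2*aA) (by linarith [aA_pos])
  constructor
  · -- first limit
    have harg : ∀ x : ℝ, 2 * Real.sqrt 2 * x / 3 = 2*aA*x := by
      intro x; unfold VFF.aA; ring
    have heq : ∀ x : ℝ, deriv v x / Real.exp (2 * Real.sqrt 2 * x / 3)
        = -(1/aA) * (1/6 + 2/3 * Real.exp (-(aA*x)) + 1/2 * Real.exp (-(2*aA*x))) := by
      intro x
      rw [hdv x, harg x]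
      set t := Real.exp (aA*x) with ht
      have htpos : 0 < t := Real.exp_pos _
      have hE : Real.exp (-(aA*x)) = t⁻¹ := by rw [Real.exp_neg]
      have h2 : Real.exp (2*aA*x) = t*t := by rw [ht, ← Real.exp_add]; ring_nf
      have h2' : Real.exp (-(2*aA*x)) = (t*t)⁻¹ := by
        rw [Real.exp_neg, h2]
      unfold VFF.hf
      rw [hE, h2, h2']
      have := aA_ne
      field_simp
      ring
    have hlim : Tendsto (fun x : ℝ =>
        -(1/aA) * (1/6 + 2/3 * Real.exp (-(aA*x)) + 1/2 * Real.exp (-(2*aA*x)))) atTop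
        (nhds (-(1/aA) * (1/6 + 2/3 * 0 + 1/2 * 0))) := by
      exact (((tendsto_const_nhds.add (hEx.const_mul (2/3))).add
        (hEx2.const_mul (1/2)))).const_mul (-(1/aA))
    have hc : -(1/aA) * (1/6 + 2/3 * 0 + 1/2 * 0) = -(1 / (2 * Real.sqrt 2)) := by
      have h2 : Real.sqrt 2 * Real.sqrt 2 = 2 := Real.mul_self_sqrt (by norm_num)
      have hs : Real.sqrt 2 ≠ 0 := ne_of_gt hs2
      unfold VFF.aA
      field_simp
      nlinarith [h2]
    rw [← hc]
    exact hlim.congr fun x => (heq x).symm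
  · -- second limit
    have hdiff : ∀ x, DifferentiableAt ℝ v x := by
      intro x
      by_contra h
      have h0 := deriv_zero_of_not_differentiableAt h
      rw [hdv x] at h0
      exact absurd h0 (ne_of_lt (hf_neg x))
    have hvD : ∀ x, HasDerivAt v (hf x) x := fun x => (hdv x) ▸ (hdiff x).hasDerivAt
    set C := v 0 - Vf 0 with hC
    have hvV : ∀ x, v x = Vf x + C := by
      have hconst : ∀ x y : ℝ, (v - Vf) x = (v - Vf) y := by
        apply is_const_of_deriv_eq_zero
        · exact fun x => ((hvD x).sub (hasDerivAt_V x)).differentiableAt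
        · intro x
          have := ((hvD x).sub (hasDerivAt_V x)).deriv
          simpa using this
      intro x
      have := hconst x 0
      simp only [Pi.sub_apply] at this
      rw [hC]; linarith
    have harg : ∀ x : ℝ, Real.sqrt 2 * x / 3 = aA*x := by
      intro x; unfold VFF.aA; ring
    -- target = (2aA/3) * A x * B x
    set A : ℝ → ℝ := fun x => -(1/aA) * (1/(12*aA) + 2/(3*aA) * Real.exp (-(aA*x))
      + x/2 * Real.exp (-(2*aA*x))) + C * Real.exp (-(2*aA*x)) with hA
    set B : ℝ → ℝ := fun x => ((1 + Real.exp (-(aA*x)))^2)⁻¹ with hB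
    have heq : ∀ x : ℝ, v x * deriv φ₀ x / Real.exp (Real.sqrt 2 * x / 3)
        = (2*aA/3) * A x * B x := by
      intro x
      rw [hP x, hvV x, harg x]
      simp only [hA, hB]
      set t := Real.exp (aA*x) with ht
      have htpos : 0 < t := Real.exp_pos _
      have hE : Real.exp (-(aA*x)) = t⁻¹ := by rw [Real.exp_neg]
      have h2 : Real.exp (2*aA*x) = t*t := by rw [ht, ← Real.exp_add]; ring_nf
      have h2' : Real.exp (-(2*aA*x)) = (t*t)⁻¹ := by rw [Real.exp_neg, h2]
      have h1 : (1:ℝ) + t⁻¹ ≠ 0 := by positivity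
      unfold VFF.Pf VFF.Vf
      rw [hE, h2, h2']
      rw [← ht]
      have := aA_ne
      field_simp
    have hAlim : Tendsto A atTop (nhds (-(1/aA) * (1/(12*aA) + 2/(3*aA) * 0 + 0) + C * 0)) := by
      rw [hA]
      refine Tendsto.add (Tendsto.const_mul _ ?_) (hEx2.const_mul C)
      refine Tendsto.add (Tendsto.add tendsto_const_nhds (hEx.const_mul _)) ?_
      have := x_exp_tendsto.const_mul (1/2 : ℝ)
      simp only [mul_zero] at this ⊢
      apply this.congr
      intro x; ring
    have hBlim : Tendsto B atTop (nhds 1) := by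
      rw [hB]
      have : Tendsto (fun x : ℝ => (1 + Real.exp (-(aA*x)))^2) atTop (nhds 1) := by
        have h := (tendsto_const_nhds (x := (1:ℝ)) (f := atTop)).add hEx
        have h2 := h.pow 2
        simpa using h2
      have := this.inv₀ (by norm_num)
      simpa using this
    have hfinal := (hAlim.const_mul (2*aA/3)).mul hBlim
    have hc : (2*aA/3) * (-(1/aA) * (1/(12*aA) + 2/(3*aA) * 0 + 0) + C * 0) * 1
        = -(1 / (6 * Real.sqrt 2)) := by
      have h2 : Real.sqrt 2 * Real.sqrt 2 = 2 := Real.mul_self_sqrt (by norm_num)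
      have hs : Real.sqrt 2 ≠ 0 := ne_of_gt hs2
      unfold VFF.aA
      field_simp
      nlinarith [h2]
    rw [← hc]
    exact hfinal.congr fun x => (heq x).symm
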